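/- Let G be a finite group and A a finite set of size q ≥ 2. Let x, y ∈ A^G be configurations lying in different G-orbits (xG ≠ yG). Then there exists a non-bijective G-equivariant transformation τ : A^G → A^G with τ(x) = y if and only if G_x ≤ G_y (the stabilizer of x is contained in the stabilizer of y). -/
import Mathlib


variable {G A : Type*}

/-- The right shift action of `G` on configurations `A^G`: `(x · g) h = x (h * g⁻¹)`. -/
def shift [Group G] (x : G → A) (g : G) : G → A := fun h => x (h * g⁻¹)

/-- A transformation of the configuration space is `G`-equivariant if it commutes
with the shift action. -/
def equivariant [Group G] (τ : (G → A) → (G → A)) : Prop :=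
  ∀ (x : G → A) (g : G), τ (shift x g) = shift (τ x) g

/-- The `G`-orbit of a configuration. -/
def orbit [Group G] (x : G → A) : Set (G → A) := Set.range (shift x)

/-- The stabilizer of a configuration, as a subgroup of `G`. -/
def stab [Group G] (x : G → A) : Subgroup G where
  carrier := {g : G | shift x g = x}
  one_mem' := by
    show shift x 1 = x
    funext h
    simp [shift]
  mul_mem' := by
    intro a b ha hb
    have ha' : shift x a = x := ha
    have hb' : shift x b = x := hb
    show shift x (a * b) = x
    funext h
    show x (h * (a * b)⁻¹) = x h
    have key : h * (a * b)⁻¹ = h * b⁻¹ * a⁻¹ := by group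
    rw [key]
    have h1 := congrFun ha' (h * b⁻¹)
    have h2 := congrFun hb' h
    simp only [shift] at h1 h2
    rw [h1, h2]
  inv_mem' := by
    intro a ha
    have ha' : shift x a = x := ha
    show shift x a⁻¹ = x
    funext h
    show x (h * a⁻¹⁻¹) = x h
    rw [inv_inv]
    have h1 := congrFun ha' (h * a)
    simp only [shift] at h1
    rw [mul_inv_cancel_right] at h1
    exact h1.symm

/-- Two subgroups `H`, `K` of `G` are conjugate, namely `K = g⁻¹ * H * g` for some `g ∈ G`. -/
def conjSub [Group G] (H K : Subgroup G) : Prop :=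
  ∃ g : G, ∀ a : G, a ∈ K ↔ g * a * g⁻¹ ∈ H

lemma shift_shift [Group G] (x : G → A) (a b : G) :
    shift (shift x a) b = shift x (a * b) := by
  funext h
  simp [shift, mul_assoc]

lemma shift_one [Group G] (x : G → A) : shift x 1 = x := by
  funext h; simp [shift]

lemma orbit_shift [Group G] (x : G → A) (g : G) : orbit (shift x g) = orbit x := by
  ext z
  constructor
  · rintro ⟨b, rfl⟩
    exact ⟨g * b, (shift_shift x g b).symm⟩
  · rintro ⟨b, rfl⟩
    exact ⟨g⁻¹ * b, by rw [shift_shift, mul_inv_cancel_left]⟩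

/-- for configurations `x`, `y` in different `G`-orbits, there is a
non-bijective `G`-equivariant transformation sending `x` to `y` iff
`stab x ≤ stab y`. -/
theorem exists_noninvertible_sending_iff_stab_le [Group G] [Fintype G] [Fintype A]
    (hq : 2 ≤ Fintype.card A)
    (x y : G → A) (hxy : orbit x ≠ orbit y) :
    (∃ τ : (G → A) → (G → A), equivariant τ ∧ ¬ Function.Bijective τ ∧ τ x = y) ↔
      stab x ≤ stab y := by
  constructor
  · rintro ⟨τ, heq, -, hτx⟩ g hg
    have hg' : shift x g = x := hg
    show shift y g = y
    have h1 := heq x g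
    rw [hg', hτx] at h1
    exact h1.symm
  · intro hst
    classical
    -- key well-definedness lemma
    have key : ∀ a b : G, shift x a = shift x b → shift y a = shift y b := by
      intro a b hab
      have h1 : shift x (a * b⁻¹) = x := by
        rw [← shift_shift, hab, shift_shift, mul_inv_cancel, shift_one]
      have h2 : (a * b⁻¹) ∈ stab y := hst h1
      have h3 : shift y (a * b⁻¹) = y := h2
      have h4 : shift (shift y (a * b⁻¹)) b = shift y b := by rw [h3]
      rw [shift_shift, inv_mul_cancel_right] at h4
      exact h4
    set c : G → A := fun _ => y 1 with hc
    have shift_c : ∀ g : G, shift c g = c := fun g => rfl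
    set τ : (G → A) → (G → A) :=
      fun z => if hz : z ∈ orbit x then shift y hz.choose else c with hτ
    have hτ_orbit : ∀ (z : G → A) (hz : z ∈ orbit x) (g : G),
        shift x g = z → τ z = shift y g := by
      intro z hz g hg
      show dite _ _ _ = _
      rw [dif_pos hz]
      exact key _ _ (hz.choose_spec.trans hg.symm)
    have hτ_not : ∀ z : G → A, z ∉ orbit x → τ z = c := fun z hz => dif_neg hz
    have hx_mem : x ∈ orbit x := ⟨1, shift_one x⟩
    have hτx : τ x = y := by
      rw [hτ_orbit x hx_mem 1 (shift_one x), shift_one]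
    have hy_not : y ∉ orbit x := by
      rintro ⟨g, hg⟩
      apply hxy
      rw [← hg, orbit_shift]
    have hτy : τ y = c := hτ_not y hy_not
    have hxny : x ≠ y := fun h => hy_not (h ▸ hx_mem)
    -- non-injectivity
    have hnotinj : ¬ Function.Injective τ := by
      by_cases hcy : c = y
      · intro hinj
        exact hxny (hinj (by rw [hτx, hτy, hcy]))
      · by_cases hcx : c ∈ orbit x
        · -- then x = c is constant, orbit x = {x}
          obtain ⟨g, hg⟩ := hcx
          have hxc : x = c := by
            have := congrArg (fun z => shift z g⁻¹) hg
            simp only [shift_shift, mul_inv_cancel, shift_one, shift_c] at this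
            exact this
          have horb : ∀ w ∈ orbit x, w = x := by
            rintro w ⟨b, rfl⟩
            rw [hxc, shift_c, ← hxc]
          by_cases h3 : ∃ z : G → A, z ≠ x ∧ z ≠ y
          · obtain ⟨z, hzx, hzy⟩ := h3
            have hz_not : z ∉ orbit x := fun hz => hzx (horb z hz)
            intro hinj
            exact hzy (hinj ((hτ_not z hz_not).trans hτy.symm))
          · exfalso
            push_neg at h3
            obtain ⟨h0, hh0⟩ : ∃ h0 : G, y h0 ≠ y 1 := by
              by_contra hall
              push_neg at hall
              apply hxny
              funext k
              rw [hxc, hall k]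
            set w : G → A := fun k => if k = 1 then y h0 else y 1 with hw
            have hwx : w ≠ x := by
              intro h
              have := congrFun h 1
              rw [hxc] at this
              simp [hw] at this
              exact hh0 this
            have hwy : w = y := h3 w hwx
            apply hh0
            have := congrFun hwy 1
            simpa [hw] using this
        · -- c ∉ orbit x and c ≠ y
          intro hinj
          exact hcy (hinj ((hτ_not c hcx).trans hτy.symm))
    refine ⟨τ, ?_, fun hb => hnotinj hb.injective, hτx⟩
    -- equivariance
    intro z g
    by_cases hz : z ∈ orbit x
    · obtain ⟨a, ha⟩ := hz
      have hz' : z ∈ orbit x := ⟨a, ha⟩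
      have hzg : shift z g ∈ orbit x := ⟨a * g, by rw [← shift_shift, ha]⟩
      rw [hτ_orbit z hz' a ha, hτ_orbit (shift z g) hzg (a * g) (by rw [← shift_shift, ha]),
        ← shift_shift]
    · have hzg : shift z g ∉ orbit x := by
        rintro ⟨a, ha⟩
        apply hz
        refine ⟨a * g⁻¹, ?_⟩
        rw [← shift_shift, ha, shift_shift, mul_inv_cancel, shift_one]
      rw [hτ_not z hz, hτ_not (shift z g) hzg, shift_c]
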